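/- arXiv:2508.12676 — 2 statements merged into one kernel-verified Lean document; each statement's English description precedes it below -/
import Mathlib

section
/- Let a_{11}, a_{22}, a_{33} be positive reals and a_{12} = a_{21}, a_{13} = a_{31}, a_{23} = a_{32} ∈ ℝ. Let C be the 3×3 real symmetric matrix with diagonal entries C_{ii} = a_{ii} and off-diagonal entries C_{ij} = −a_{ij}. Then for every r_1 ∈ ℕ and all x ∈ ℝ³: (A_1*)^{r_1} exp(−xᵀCx) = (1+a_{11})^{r_1/2} · H_{r_1}(S_1(x)) · exp(−xᵀCx), where S_1(x) = ((1+a_{11}) x_1 − a_{12} x_2 − a_{13} x_3) / √(1+a_{11}). -/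
/-- The physicists' Hermite polynomial `H_n(x) = (-1)^n e^{x^2} (d^n/dx^n) e^{-x^2}`. -/
noncomputable def Hpoly (n : ℕ) (x : ℝ) : ℝ :=
  (-1 : ℝ) ^ n * Real.exp (x ^ 2) * iteratedDeriv n (fun y => Real.exp (-(y ^ 2))) x

/-- Partial derivative in the `j`-th coordinate of a function on `ℝ³`. -/
noncomputable def pd (j : Fin 3) (f : (Fin 3 → ℝ) → ℝ) : (Fin 3 → ℝ) → ℝ :=
  fun x => deriv (fun t => f (Function.update x j t)) (x j)

/-- The creation operator `A_j* f = -∂f/∂x_j + 2 x_j f` on functions on `ℝ³`. -/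
noncomputable def creation (j : Fin 3) (f : (Fin 3 → ℝ) → ℝ) : (Fin 3 → ℝ) → ℝ :=
  fun x => -(pd j f x) + 2 * x j * f x

lemma gsmooth : ContDiff ℝ ⊤ (fun y : ℝ => Real.exp (-(y ^ 2))) :=
  Real.contDiff_exp.comp ((contDiff_id.pow 2).neg)

lemma gder (n : ℕ) (s : ℝ) :
    HasDerivAt (iteratedDeriv n (fun y : ℝ => Real.exp (-(y ^ 2))))
      (iteratedDeriv (n+1) (fun y : ℝ => Real.exp (-(y ^ 2))) s) s := by
  rw [iteratedDeriv_succ]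
  exact ((gsmooth.differentiable_iteratedDeriv n (by simp)).differentiableAt).hasDerivAt

lemma hpolyDer (n : ℕ) (s : ℝ) :
    HasDerivAt (Hpoly n) (2 * s * Hpoly n s - Hpoly (n+1) s) s := by
  have h1 : HasDerivAt (fun y : ℝ => Real.exp (y ^ 2)) (Real.exp (s ^ 2) * (2 * s ^ 1)) s :=
    (hasDerivAt_pow 2 s).exp
  have h := ((h1.const_mul ((-1:ℝ) ^ n)).mul (gder n s))
  refine h.congr_deriv ?_
  simp only [Hpoly, pow_succ]; ring

lemma hpoly_zero (s : ℝ) : Hpoly 0 s = 1 := by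
  simp [Hpoly, iteratedDeriv_zero, ← Real.exp_add]

theorem stmt2 (a : Fin 3 → Fin 3 → ℝ) (hpos : ∀ i, 0 < a i i)
    (hsymm : ∀ i j, a i j = a j i)
    (C : Matrix (Fin 3) (Fin 3) ℝ)
    (hC : ∀ i j, C i j = if i = j then a i i else -(a i j))
    (r1 : ℕ) (x : Fin 3 → ℝ) :
    (creation 0)^[r1] (fun y => Real.exp (-(∑ i, ∑ j, y i * C i j * y j))) x
      = (1 + a 0 0) ^ ((r1 : ℝ)/2) *
        Hpoly r1 (((1 + a 0 0) * x 0 - a 0 1 * x 1 - a 0 2 * x 2) / Real.sqrt (1 + a 0 0)) *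
        Real.exp (-(∑ i, ∑ j, x i * C i j * x j)) := by
  have hb : (0:ℝ) < 1 + a 0 0 := by linarith [hpos 0]
  have hsb : (0:ℝ) < Real.sqrt (1 + a 0 0) := Real.sqrt_pos.mpr hb
  have hsb2 : Real.sqrt (1 + a 0 0) * Real.sqrt (1 + a 0 0) = 1 + a 0 0 :=
    Real.mul_self_sqrt hb.le
  have hQ : ∀ y : Fin 3 → ℝ, (∑ i, ∑ j, y i * C i j * y j)
      = a 0 0 * y 0 ^ 2 - 2 * a 0 1 * y 0 * y 1 - 2 * a 0 2 * y 0 * y 2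
        + (a 1 1 * y 1 ^ 2 + a 2 2 * y 2 ^ 2 - 2 * a 1 2 * y 1 * y 2) := by
    intro y
    simp only [Fin.sum_univ_three, hC]
    norm_num [Fin.ext_iff, hsymm 1 0, hsymm 2 0, hsymm 2 1]
    ring
  induction r1 generalizing x with
  | zero =>
    simp [hpoly_zero]
  | succ n ih =>
    rw [Function.iterate_succ_apply', funext ih]
    simp only [creation, pd, hQ, Function.update_self,
      Function.update_of_ne (show (1:Fin 3) ≠ 0 by decide),
      Function.update_of_ne (show (2:Fin 3) ≠ 0 by decide)]
    have hs2 : Real.sqrt (1 + a 0 0)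
        * (((1 + a 0 0) * x 0 - a 0 1 * x 1 - a 0 2 * x 2) / Real.sqrt (1 + a 0 0))
        = (1 + a 0 0) * x 0 - a 0 1 * x 1 - a 0 2 * x 2 := by
      field_simp
    have hlin : HasDerivAt
        (fun t : ℝ => ((1 + a 0 0) * t - a 0 1 * x 1 - a 0 2 * x 2) / Real.sqrt (1 + a 0 0))
        ((1 + a 0 0) / Real.sqrt (1 + a 0 0)) (x 0) := by
      have := ((((hasDerivAt_id (x 0)).const_mul (1 + a 0 0)).sub_const
        (a 0 1 * x 1)).sub_const (a 0 2 * x 2)).div_const (Real.sqrt (1 + a 0 0))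
      refine this.congr_deriv ?_
      norm_num
    have hH := (hpolyDer n (((1 + a 0 0) * x 0 - a 0 1 * x 1 - a 0 2 * x 2)
      / Real.sqrt (1 + a 0 0))).comp (x 0) hlin
    simp only [Function.comp_def] at hH
    have hq0 : HasDerivAt
        (fun t : ℝ => a 0 0 * t ^ 2 - 2 * a 0 1 * t * x 1 - 2 * a 0 2 * t * x 2)
        (a 0 0 * (2 * x 0) - 2 * a 0 1 * x 1 - 2 * a 0 2 * x 2) (x 0) := by
      have := (((hasDerivAt_pow 2 (x 0)).const_mul (a 0 0)).sub
        (((hasDerivAt_id (x 0)).const_mul (2 * a 0 1)).mul_const (x 1))).sub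
        (((hasDerivAt_id (x 0)).const_mul (2 * a 0 2)).mul_const (x 2))
      refine this.congr_deriv ?_
      norm_num
    have hE := ((hq0.add_const
      (a 1 1 * x 1 ^ 2 + a 2 2 * x 2 ^ 2 - 2 * a 1 2 * x 1 * x 2)).neg).exp
    have hF := ((hH.mul hE).const_mul ((1 + a 0 0) ^ ((n : ℝ)/2)))
    rw [show (fun t : ℝ => (1 + a 0 0) ^ ((n : ℝ)/2) *
          Hpoly n (((1 + a 0 0) * t - a 0 1 * x 1 - a 0 2 * x 2) / Real.sqrt (1 + a 0 0)) *
          Real.exp (-(a 0 0 * t ^ 2 - 2 * a 0 1 * t * x 1 - 2 * a 0 2 * t * x 2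
            + (a 1 1 * x 1 ^ 2 + a 2 2 * x 2 ^ 2 - 2 * a 1 2 * x 1 * x 2))))
        = (fun t : ℝ => (1 + a 0 0) ^ ((n : ℝ)/2) *
          (Hpoly n (((1 + a 0 0) * t - a 0 1 * x 1 - a 0 2 * x 2) / Real.sqrt (1 + a 0 0)) *
          Real.exp (-(a 0 0 * t ^ 2 - 2 * a 0 1 * t * x 1 - 2 * a 0 2 * t * x 2
            + (a 1 1 * x 1 ^ 2 + a 2 2 * x 2 ^ 2 - 2 * a 1 2 * x 1 * x 2)))))
      from by funext t; ring]
    simp only [Pi.mul_apply, Pi.neg_apply] at hF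
    rw [hF.deriv]
    push_cast
    have hK : (1 + a 0 0) ^ (((n:ℝ)+1)/2)
        = (1 + a 0 0) ^ ((n : ℝ)/2) * Real.sqrt (1 + a 0 0) := by
      rw [Real.sqrt_eq_rpow, ← Real.rpow_add hb, ← add_div]
    rw [hK, Real.div_sqrt]
    linear_combination (-2 * (1 + a 0 0) ^ ((n : ℝ)/2)
      * Hpoly n (((1 + a 0 0) * x 0 - a 0 1 * x 1 - a 0 2 * x 2) / Real.sqrt (1 + a 0 0))
      * Real.exp (-(a 0 0 * x 0 ^ 2 - 2 * a 0 1 * x 0 * x 1 - 2 * a 0 2 * x 0 * x 2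
        + (a 1 1 * x 1 ^ 2 + a 2 2 * x 2 ^ 2 - 2 * a 1 2 * x 1 * x 2)))) * hs2
end

section
/- Let a_{11}, a_{22}, a_{33} be positive reals and a_{12} = a_{21}, a_{13} = a_{31}, a_{23} = a_{32} ∈ ℝ. Let C be the 3×3 real symmetric matrix with diagonal entries C_{ii} = a_{ii} and off-diagonal entries C_{ij} = −a_{ij}. Then for all r_1, r_2 ∈ ℕ and all x ∈ ℝ³: (A_2*)^{r_2} (A_1*)^{r_1} exp(−xᵀCx) = (1+a_{11})^{r_1/2} (1+a_{22})^{r_2/2} · Σ_{k=0}^{min(r_1, r_2)} C(r_1, k) C(r_2, k) · (2 a_{12})^k k! / ((1+a_{11})(1+a_{22}))^{k/2} · H_{r_2−k}(S_2(x)) · H_{r_1−k}(S_1(x)) · exp(−xᵀCx), where C(n,k) denotes the binomial coefficient. -/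
/-- `S_i(x) = ((1+a_{ii}) x_i - ∑_{j ≠ i} a_{ij} x_j) / √(1+a_{ii})`. -/
noncomputable def Sfun (a : Fin 3 → Fin 3 → ℝ) (i : Fin 3) (x : Fin 3 → ℝ) : ℝ :=
  ((1 + a i i) * x i - ∑ j ∈ Finset.univ.filter (fun j => j ≠ i), a i j * x j) /
    Real.sqrt (1 + a i i)


noncomputable def Ppoly : ℕ → Polynomial ℝ
  | 0 => 1
  | (n+1) => Polynomial.C 2 * Polynomial.X * Ppoly n - Polynomial.derivative (Ppoly n)

open Polynomial in
lemma Ppoly_derivative : ∀ n : ℕ, Polynomial.derivative (Ppoly (n+1))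
    = Polynomial.C (2*(n+1) : ℝ) * Ppoly n := by
  intro n
  induction n with
  | zero =>
      show derivative (C 2 * X * Ppoly 0 - derivative (Ppoly 0)) = _
      norm_num [show Ppoly 0 = 1 from rfl]
  | succ m ih =>
      show derivative (C 2 * X * Ppoly (m+1) - derivative (Ppoly (m+1))) = _
      rw [derivative_sub, derivative_mul, derivative_mul, ih, derivative_mul]
      have hp : Ppoly (m+1) = C 2 * X * Ppoly m - derivative (Ppoly m) := rfl
      rw [hp]
      simp only [derivative_add, derivative_mul, derivative_C, derivative_one, derivative_X, C_add, C_mul, C_1]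
      push_cast
      simp only [derivative_add, derivative_mul, derivative_C, derivative_one, derivative_X, C_add, C_mul, C_1]
      ring

lemma iteratedDeriv_gauss (n : ℕ) :
    iteratedDeriv n (fun y => Real.exp (-(y ^ 2)))
      = fun y => (-1 : ℝ) ^ n * ((Ppoly n).eval y * Real.exp (-(y ^ 2))) := by
  induction n with
  | zero => funext y; simp [Ppoly]
  | succ n ih =>
      rw [iteratedDeriv_succ, ih]
      funext y
      have h1 : HasDerivAt (fun y : ℝ => Real.exp (-(y ^ 2)))
          (Real.exp (-(y ^ 2)) * (-(2 * y))) y := by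
        have := ((hasDerivAt_pow 2 y).neg).exp
        simpa using this
      have h2 : HasDerivAt (fun y : ℝ => (Ppoly n).eval y * Real.exp (-(y ^ 2)))
          ((Polynomial.derivative (Ppoly n)).eval y * Real.exp (-(y ^ 2))
            + (Ppoly n).eval y * (Real.exp (-(y ^ 2)) * (-(2 * y)))) y :=
        ((Ppoly n).hasDerivAt y).mul h1
      have h3 := (h2.const_mul ((-1 : ℝ) ^ n)).deriv
      rw [h3]
      have hp : Ppoly (n+1) = Polynomial.C 2 * Polynomial.X * Ppoly n
          - Polynomial.derivative (Ppoly n) := rfl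
      rw [hp]
      simp only [Polynomial.eval_sub, Polynomial.eval_mul, Polynomial.eval_C, Polynomial.eval_X,
        pow_succ]
      ring

lemma Hpoly_eval (n : ℕ) (y : ℝ) : Hpoly n y = (Ppoly n).eval y := by
  rw [Hpoly, iteratedDeriv_gauss]
  have : Real.exp (y ^ 2) * Real.exp (-(y ^ 2)) = 1 := by
    rw [← Real.exp_add]; simp
  have hs : ((-1 : ℝ) ^ n) * ((-1 : ℝ) ^ n) = 1 := by
    rw [← pow_add]; exact Even.neg_one_pow ⟨n, rfl⟩
  show (-1 : ℝ) ^ n * Real.exp (y ^ 2)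
      * ((-1 : ℝ) ^ n * ((Ppoly n).eval y * Real.exp (-(y ^ 2)))) = (Ppoly n).eval y
  calc (-1 : ℝ) ^ n * Real.exp (y ^ 2)
      * ((-1 : ℝ) ^ n * ((Ppoly n).eval y * Real.exp (-(y ^ 2))))
      = ((-1 : ℝ) ^ n * (-1 : ℝ) ^ n) * (Real.exp (y ^ 2) * Real.exp (-(y ^ 2)))
        * (Ppoly n).eval y := by ring
    _ = (Ppoly n).eval y := by rw [hs, this]; ring

lemma Hpoly_zero (y : ℝ) : Hpoly 0 y = 1 := by
  rw [Hpoly_eval]; simp [Ppoly]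

lemma hasDerivAt_Hpoly (n : ℕ) (y : ℝ) :
    HasDerivAt (fun s => Hpoly n s) (2 * n * Hpoly (n - 1) y) y := by
  have hfe : (fun s => Hpoly n s) = fun s => (Ppoly n).eval s := by
    funext s; exact Hpoly_eval n s
  rw [hfe]
  cases n with
  | zero => simpa [Ppoly] using (hasDerivAt_const y (1:ℝ))
  | succ m =>
      have := (Ppoly (m+1)).hasDerivAt y
      rw [Ppoly_derivative m] at this
      simpa [Hpoly_eval, mul_comm, mul_assoc] using this

lemma Hpoly_succ (n : ℕ) (y : ℝ) :
    Hpoly (n + 1) y = 2 * y * Hpoly n y - 2 * n * Hpoly (n - 1) y := by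
  rw [Hpoly_eval, Hpoly_eval, show Ppoly (n+1) = Polynomial.C 2 * Polynomial.X * Ppoly n
      - Polynomial.derivative (Ppoly n) from rfl]
  cases n with
  | zero => simp [Ppoly]
  | succ m =>
      rw [Ppoly_derivative m]
      simp [Hpoly_eval]

lemma hasDerivAt_Sfun (a : Fin 3 → Fin 3 → ℝ) (i j : Fin 3) (x : Fin 3 → ℝ) :
    HasDerivAt (fun t => Sfun a i (Function.update x j t))
      ((if i = j then 1 + a i i else -(a i j)) / Real.sqrt (1 + a i i)) (x j) := by
  unfold Sfun
  have h1 : HasDerivAt (fun t => (1 + a i i) * Function.update x j t i)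
      (if i = j then 1 + a i i else 0) (x j) := by
    by_cases h : i = j
    · subst h
      simp only [Function.update_self, if_pos rfl]
      simpa using (hasDerivAt_id (x i)).const_mul (1 + a i i)
    · simp only [Function.update_of_ne h, if_neg h]
      exact hasDerivAt_const _ _
  have h2 : HasDerivAt
      (fun t => ∑ l ∈ Finset.univ.filter (fun l => l ≠ i), a i l * Function.update x j t l)
      (∑ l ∈ Finset.univ.filter (fun l => l ≠ i), if l = j then a i l else 0) (x j) := by
    apply HasDerivAt.fun_sum
    intro l _
    by_cases h : l = j
    · subst h
      simp only [Function.update_self, if_pos rfl]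
      simpa using (hasDerivAt_id (x l)).const_mul (a i l)
    · simp only [Function.update_of_ne h, if_neg h]
      exact hasDerivAt_const _ _
  have h3 := (h1.fun_sub h2).div_const (Real.sqrt (1 + a i i))
  convert h3 using 2
  · rfl
  · rfl
  rw [Finset.sum_ite_eq' _ j (fun l => a i l)]
  by_cases h : i = j
  · subst h; simp
  · simp [Ne.symm h, h]

lemma hasDerivAt_Q (C : Matrix (Fin 3) (Fin 3) ℝ) (j : Fin 3) (x : Fin 3 → ℝ) :
    HasDerivAt (fun t => ∑ i, ∑ l, (Function.update x j t) i * C i l * (Function.update x j t) l)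
      (∑ i, ∑ l, ((if i = j then C i l * x l else 0) + (if l = j then x i * C i l else 0)))
      (x j) := by
  apply HasDerivAt.fun_sum
  intro i _
  apply HasDerivAt.fun_sum
  intro l _
  by_cases hi : i = j <;> by_cases hl : l = j
  · subst hi; subst hl
    simp only [Function.update_self, if_pos rfl]
    exact (((hasDerivAt_id _).mul_const _).mul (hasDerivAt_id _)).congr_deriv
      (by simp only [id_eq, one_mul, mul_one, if_true]; try ring)
  · subst hi
    simp only [Function.update_self, Function.update_of_ne hl, if_pos rfl, if_neg hl]
    exact (((hasDerivAt_id _).mul_const _).mul_const _).congr_deriv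
      (by simp only [id_eq, one_mul, mul_one, if_true]; try ring)
  · subst hl
    simp only [Function.update_self, Function.update_of_ne hi, if_neg hi, if_pos rfl]
    exact (((hasDerivAt_const _ _).mul_const _).mul (hasDerivAt_id _)).congr_deriv
      (by simp only [id_eq, one_mul, mul_one, zero_mul, mul_zero, if_true]; try ring)
  · simp only [Function.update_of_ne hi, Function.update_of_ne hl, if_neg hi, if_neg hl]
    exact (hasDerivAt_const _ _).congr_deriv (by ring)

noncomputable def Efun (C : Matrix (Fin 3) (Fin 3) ℝ) (y : Fin 3 → ℝ) : ℝ :=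
  Real.exp (-(∑ i, ∑ j, y i * C i j * y j))

noncomputable def Gfun (a : Fin 3 → Fin 3 → ℝ) (C : Matrix (Fin 3) (Fin 3) ℝ)
    (m n : ℕ) (y : Fin 3 → ℝ) : ℝ :=
  Hpoly m (Sfun a 1 y) * (Hpoly n (Sfun a 0 y) * Efun C y)

lemma filter_sum0 (f : Fin 3 → ℝ) :
    ∑ j ∈ Finset.univ.filter (fun j => j ≠ (0 : Fin 3)), f j = f 1 + f 2 := by
  rw [Finset.sum_filter, Fin.sum_univ_three]
  norm_num [Fin.ext_iff]

lemma filter_sum1 (f : Fin 3 → ℝ) :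
    ∑ j ∈ Finset.univ.filter (fun j => j ≠ (1 : Fin 3)), f j = f 0 + f 2 := by
  rw [Finset.sum_filter, Fin.sum_univ_three]
  norm_num [Fin.ext_iff]


lemma sum_reindex (r1 r2 : ℕ) (s0 s1 b : ℝ) (hs0 : s0 ≠ 0) (hs1 : s1 ≠ 0) (g : ℕ → ℕ → ℝ) :
    ∑ k ∈ Finset.range (r1+1),
      ((r1.choose k : ℝ) * (r2.choose k : ℝ) * (2*b)^k * (k.factorial : ℝ) / (s0*s1)^k)
        * (s1 * g (r2-k+1) (r1-k) + (2*((r1-k : ℕ) : ℝ)*b/s0) * g (r2-k) (r1-k-1))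
    = s1 * ∑ k ∈ Finset.range (r1+1),
      ((r1.choose k : ℝ) * (((r2+1).choose k : ℕ) : ℝ) * (2*b)^k * (k.factorial : ℝ) / (s0*s1)^k)
        * g (r2+1-k) (r1-k) := by
  rw [Finset.mul_sum]
  simp only [mul_add]
  rw [Finset.sum_add_distrib]
  rw [Finset.sum_range_succ
    (fun k => ((r1.choose k : ℝ) * (r2.choose k : ℝ) * (2*b)^k * (k.factorial : ℝ) / (s0*s1)^k)
        * ((2*((r1-k : ℕ) : ℝ)*b/s0) * g (r2-k) (r1-k-1)))]
  rw [Nat.sub_self]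
  norm_num
  rw [Finset.sum_range_succ' (fun k =>
      ((r1.choose k : ℝ) * (r2.choose k : ℝ) * (2*b)^k * (k.factorial : ℝ) / (s0*s1)^k)
        * (s1 * g (r2-k+1) (r1-k)))]
  rw [Finset.sum_range_succ' (fun k =>
      s1 * (((r1.choose k : ℝ) * (((r2+1).choose k : ℕ) : ℝ) * (2*b)^k * (k.factorial : ℝ) / (s0*s1)^k)
        * g (r2+1-k) (r1-k)))]
  have h00 : ((r1.choose 0 : ℝ) * (r2.choose 0 : ℝ) * (2*b)^0 * ((0:ℕ).factorial : ℝ) / (s0*s1)^0)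
        * (s1 * g (r2-0+1) (r1-0))
      = s1 * (((r1.choose 0 : ℝ) * (((r2+1).choose 0 : ℕ) : ℝ) * (2*b)^0 * ((0:ℕ).factorial : ℝ) / (s0*s1)^0)
        * g (r2+1-0) (r1-0)) := by
    simp
  rw [h00]
  have hsum : (∑ k ∈ Finset.range r1,
        ((r1.choose (k+1) : ℝ) * (r2.choose (k+1) : ℝ) * (2*b)^(k+1) * ((k+1).factorial : ℝ) / (s0*s1)^(k+1))
          * (s1 * g (r2-(k+1)+1) (r1-(k+1))))
      + (∑ k ∈ Finset.range r1,
        ((r1.choose k : ℝ) * (r2.choose k : ℝ) * (2*b)^k * (k.factorial : ℝ) / (s0*s1)^k)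
          * ((2*((r1-k : ℕ) : ℝ)*b/s0) * g (r2-k) (r1-k-1)))
      = ∑ k ∈ Finset.range r1,
        s1 * (((r1.choose (k+1) : ℝ) * (((r2+1).choose (k+1) : ℕ) : ℝ) * (2*b)^(k+1) * ((k+1).factorial : ℝ) / (s0*s1)^(k+1))
          * g (r2+1-(k+1)) (r1-(k+1))) := by
    rw [← Finset.sum_add_distrib]
    apply Finset.sum_congr rfl
    intro k hk
    have hkr1 : k < r1 := Finset.mem_range.mp hk
    have hidx1 : r1 - k - 1 = r1 - (k+1) := by omega
    have hidx2 : r2 + 1 - (k+1) = r2 - k := by omega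
    have hrk : ((r1.choose (k+1) : ℝ)) * ((k:ℝ)+1) = (r1.choose k : ℝ) * (((r1 - k : ℕ)) : ℝ) := by
      exact_mod_cast Nat.choose_succ_right_eq r1 k
    have hsub : ((r1.choose (k+1) : ℝ)) = (r1.choose k : ℝ) * (((r1 - k : ℕ)) : ℝ) / ((k:ℝ)+1) := by
      field_simp
      linarith [hrk]
    have hfact : (((k+1).factorial : ℕ) : ℝ) = ((k:ℝ)+1) * (k.factorial : ℝ) := by
      rw [Nat.factorial_succ]; push_cast; ring
    rw [hidx1, hidx2, hfact, hsub]
    by_cases hk2 : k + 1 ≤ r2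
    · have hidx3 : r2 - (k+1) + 1 = r2 - k := by omega
      have hch : (((r2+1).choose (k+1) : ℕ) : ℝ) = (r2.choose (k+1) : ℝ) + (r2.choose k : ℝ) := by
        rw [Nat.choose_succ_succ']
        push_cast; ring
      rw [hidx3, hch]
      have hpow : (s0*s1)^(k+1) = (s0*s1)^k * (s0*s1) := pow_succ _ _
      rw [hpow]
      field_simp
      ring
    · have hq0 : r2.choose (k+1) = 0 := Nat.choose_eq_zero_of_lt (by omega)
      have hch : (((r2+1).choose (k+1) : ℕ) : ℝ) = (r2.choose k : ℝ) := by
        rw [Nat.choose_succ_succ', hq0]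
        push_cast; ring
      rw [hch, hq0]
      have hpow : (s0*s1)^(k+1) = (s0*s1)^k * (s0*s1) := pow_succ _ _
      rw [hpow]
      field_simp
      ring
  rw [← hsum]
  ring

section Key

variable (a : Fin 3 → Fin 3 → ℝ) (C : Matrix (Fin 3) (Fin 3) ℝ)

lemma hasDerivAt_G1 (hpos : ∀ i, 0 < a i i) (hsymm : ∀ i j, a i j = a j i)
    (hC : ∀ i j, C i j = if i = j then a i i else -(a i j))
    (m n : ℕ) (x : Fin 3 → ℝ) :
    HasDerivAt (fun t => Gfun a C m n (Function.update x 1 t))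
      (2 * x 1 * Gfun a C m n x
        - (Real.sqrt (1 + a 1 1) * Gfun a C (m+1) n x
          + (2 * n * a 0 1 / Real.sqrt (1 + a 0 0)) * Gfun a C m (n-1) x)) (x 1) := by
  have h0 : (0:ℝ) < 1 + a 0 0 := by have := hpos 0; linarith
  have h1 : (0:ℝ) < 1 + a 1 1 := by have := hpos 1; linarith
  set s0 := Real.sqrt (1 + a 0 0) with hs0def
  set s1 := Real.sqrt (1 + a 1 1) with hs1def
  have hs0 : s0 ^ 2 = 1 + a 0 0 := Real.sq_sqrt h0.le
  have hs1 : s1 ^ 2 = 1 + a 1 1 := Real.sq_sqrt h1.le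
  have hs0ne : s0 ≠ 0 := by positivity
  have hs1ne : s1 ≠ 0 := by positivity
  have h10 : a 1 0 = a 0 1 := hsymm 1 0
  have h21 : a 2 1 = a 1 2 := hsymm 2 1
  have hup : Function.update x 1 (x 1) = x := Function.update_eq_self _ _
  -- derivative of S1 along e1
  have hS1 : HasDerivAt (fun t => Sfun a 1 (Function.update x 1 t)) s1 (x 1) := by
    have h := hasDerivAt_Sfun a 1 1 x
    apply h.congr_deriv
    rw [if_pos rfl, ← hs1, sq]
    field_simp
    rw [Real.sqrt_sq (by positivity)]
  -- derivative of S0 along e1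
  have hS0 : HasDerivAt (fun t => Sfun a 0 (Function.update x 1 t)) (-(a 0 1) / s0) (x 1) := by
    have h := hasDerivAt_Sfun a 0 1 x
    apply h.congr_deriv
    rw [if_neg (by decide)]
  -- derivative of the quadratic form along e1
  have hQ1 : HasDerivAt (fun t => ∑ i, ∑ l,
        (Function.update x 1 t) i * C i l * (Function.update x 1 t) l)
      (2 * (a 1 1 * x 1 - a 0 1 * x 0 - a 1 2 * x 2)) (x 1) := by
    have h := hasDerivAt_Q C 1 x
    apply h.congr_deriv
    rw [Fin.sum_univ_three]
    simp only [Fin.sum_univ_three, hC]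
    norm_num [Fin.ext_iff, h10, h21]
    ring
  -- derivative of E along e1
  have hE : HasDerivAt (fun t => Efun C (Function.update x 1 t))
      (Efun C x * (-(2 * (a 1 1 * x 1 - a 0 1 * x 0 - a 1 2 * x 2)))) (x 1) := by
    have h := hQ1.fun_neg.exp
    rw [hup] at h
    exact h
  -- derivative of the Hermite factors
  have hHm : HasDerivAt (fun t => Hpoly m (Sfun a 1 (Function.update x 1 t)))
      (2 * m * Hpoly (m-1) (Sfun a 1 x) * s1) (x 1) := by
    have h := (hasDerivAt_Hpoly m (Sfun a 1 (Function.update x 1 (x 1)))).comp (x 1) hS1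
    rw [hup] at h; exact h
  have hHn : HasDerivAt (fun t => Hpoly n (Sfun a 0 (Function.update x 1 t)))
      (2 * n * Hpoly (n-1) (Sfun a 0 x) * (-(a 0 1) / s0)) (x 1) := by
    have h := (hasDerivAt_Hpoly n (Sfun a 0 (Function.update x 1 (x 1)))).comp (x 1) hS0
    rw [hup] at h; exact h
  have hD := hHm.fun_mul (hHn.fun_mul hE)
  rw [hup] at hD
  unfold Gfun
  apply hD.congr_deriv
  -- now pure algebra
  have hS1x : Sfun a 1 x = ((1 + a 1 1) * x 1 - (a 0 1 * x 0 + a 1 2 * x 2)) / s1 := by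
    unfold Sfun
    rw [filter_sum1 (fun j => a 1 j * x j)]
    rw [h10]
  have ha11 : a 1 1 = s1 ^ 2 - 1 := by rw [hs1]; ring
  rw [Hpoly_succ m (Sfun a 1 x), hS1x, ha11]
  field_simp
  ring



lemma hasDerivAt_G0 (hpos : ∀ i, 0 < a i i) (hsymm : ∀ i j, a i j = a j i)
    (hC : ∀ i j, C i j = if i = j then a i i else -(a i j))
    (m n : ℕ) (x : Fin 3 → ℝ) :
    HasDerivAt (fun t => Gfun a C m n (Function.update x 0 t))
      (2 * x 0 * Gfun a C m n x
        - (Real.sqrt (1 + a 0 0) * Gfun a C m (n+1) x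
          + (2 * m * a 0 1 / Real.sqrt (1 + a 1 1)) * Gfun a C (m-1) n x)) (x 0) := by
  have h0 : (0:ℝ) < 1 + a 0 0 := by have := hpos 0; linarith
  have h1 : (0:ℝ) < 1 + a 1 1 := by have := hpos 1; linarith
  set s0 := Real.sqrt (1 + a 0 0) with hs0def
  set s1 := Real.sqrt (1 + a 1 1) with hs1def
  have hs0 : s0 ^ 2 = 1 + a 0 0 := Real.sq_sqrt h0.le
  have hs1 : s1 ^ 2 = 1 + a 1 1 := Real.sq_sqrt h1.le
  have hs0ne : s0 ≠ 0 := by positivity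
  have hs1ne : s1 ≠ 0 := by positivity
  have h10 : a 1 0 = a 0 1 := hsymm 1 0
  have h20 : a 2 0 = a 0 2 := hsymm 2 0
  have hup : Function.update x 0 (x 0) = x := Function.update_eq_self _ _
  have hS0 : HasDerivAt (fun t => Sfun a 0 (Function.update x 0 t)) s0 (x 0) := by
    have h := hasDerivAt_Sfun a 0 0 x
    apply h.congr_deriv
    rw [if_pos rfl, ← hs0, sq]
    field_simp
    rw [Real.sqrt_sq (by positivity)]
  have hS1 : HasDerivAt (fun t => Sfun a 1 (Function.update x 0 t)) (-(a 0 1) / s1) (x 0) := by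
    have h := hasDerivAt_Sfun a 1 0 x
    apply h.congr_deriv
    rw [if_neg (by decide), h10]
  have hQ0 : HasDerivAt (fun t => ∑ i, ∑ l,
        (Function.update x 0 t) i * C i l * (Function.update x 0 t) l)
      (2 * (a 0 0 * x 0 - a 0 1 * x 1 - a 0 2 * x 2)) (x 0) := by
    have h := hasDerivAt_Q C 0 x
    apply h.congr_deriv
    rw [Fin.sum_univ_three]
    simp only [Fin.sum_univ_three, hC]
    norm_num [Fin.ext_iff, h10, h20]
    ring
  have hE : HasDerivAt (fun t => Efun C (Function.update x 0 t))
      (Efun C x * (-(2 * (a 0 0 * x 0 - a 0 1 * x 1 - a 0 2 * x 2)))) (x 0) := by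
    have h := hQ0.fun_neg.exp
    rw [hup] at h
    exact h
  have hHm : HasDerivAt (fun t => Hpoly m (Sfun a 1 (Function.update x 0 t)))
      (2 * m * Hpoly (m-1) (Sfun a 1 x) * (-(a 0 1) / s1)) (x 0) := by
    have h := (hasDerivAt_Hpoly m (Sfun a 1 (Function.update x 0 (x 0)))).comp (x 0) hS1
    rw [hup] at h; exact h
  have hHn : HasDerivAt (fun t => Hpoly n (Sfun a 0 (Function.update x 0 t)))
      (2 * n * Hpoly (n-1) (Sfun a 0 x) * s0) (x 0) := by
    have h := (hasDerivAt_Hpoly n (Sfun a 0 (Function.update x 0 (x 0)))).comp (x 0) hS0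
    rw [hup] at h; exact h
  have hD := hHm.fun_mul (hHn.fun_mul hE)
  rw [hup] at hD
  unfold Gfun
  apply hD.congr_deriv
  have hS0x : Sfun a 0 x = ((1 + a 0 0) * x 0 - (a 0 1 * x 1 + a 0 2 * x 2)) / s0 := by
    unfold Sfun
    rw [filter_sum0 (fun j => a 0 j * x j)]
  have ha00 : a 0 0 = s0 ^ 2 - 1 := by rw [hs0]; ring
  rw [Hpoly_succ n (Sfun a 0 x), hS0x, ha00]
  field_simp
  ring

lemma creation_apply_of_hasDerivAt (j : Fin 3) (f : (Fin 3 → ℝ) → ℝ) (x : Fin 3 → ℝ) (D : ℝ)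
    (h : HasDerivAt (fun t => f (Function.update x j t)) D (x j)) :
    creation j f x = -D + 2 * x j * f x := by
  unfold creation pd
  rw [h.deriv]



lemma step1 (hpos : ∀ i, 0 < a i i) (hsymm : ∀ i j, a i j = a j i)
    (hC : ∀ i j, C i j = if i = j then a i i else -(a i j)) (r : ℕ) :
    (creation 0)^[r] (Gfun a C 0 0)
      = fun x => (Real.sqrt (1 + a 0 0))^r * Gfun a C 0 r x := by
  induction r with
  | zero => funext x; simp
  | succ r ih =>
      rw [Function.iterate_succ_apply', ih]
      funext x
      have h := (hasDerivAt_G0 a C hpos hsymm hC 0 r x).const_mul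
        ((Real.sqrt (1 + a 0 0))^r)
      rw [creation_apply_of_hasDerivAt 0
        (fun y => (Real.sqrt (1 + a 0 0))^r * Gfun a C 0 r y) x _ (by exact h)]
      norm_num
      ring

lemma step2 (hpos : ∀ i, 0 < a i i) (hsymm : ∀ i j, a i j = a j i)
    (hC : ∀ i j, C i j = if i = j then a i i else -(a i j)) (r1 r2 : ℕ) :
    (creation 1)^[r2] (Gfun a C 0 r1)
      = fun x => (Real.sqrt (1 + a 1 1))^r2 * ∑ k ∈ Finset.range (r1+1),
          ((r1.choose k : ℝ) * (r2.choose k : ℝ) * (2 * a 0 1)^k * (k.factorial : ℝ)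
              / (Real.sqrt (1 + a 0 0) * Real.sqrt (1 + a 1 1))^k)
            * Gfun a C (r2-k) (r1-k) x := by
  have h0 : (0:ℝ) < 1 + a 0 0 := by have := hpos 0; linarith
  have h1 : (0:ℝ) < 1 + a 1 1 := by have := hpos 1; linarith
  set s0 := Real.sqrt (1 + a 0 0) with hs0def
  set s1 := Real.sqrt (1 + a 1 1) with hs1def
  have hs0ne : s0 ≠ 0 := by positivity
  have hs1ne : s1 ≠ 0 := by positivity
  induction r2 with
  | zero =>
      funext x
      rw [Finset.sum_eq_single 0]
      · simp
      · intro k hk hkne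
        have : r1 < k ∨ Nat.choose 0 k = 0 := by
          right; exact Nat.choose_eq_zero_of_lt (Nat.pos_of_ne_zero hkne)
        simp [Nat.choose_eq_zero_of_lt (Nat.pos_of_ne_zero hkne)]
      · intro h; exact absurd (Finset.mem_range.mpr (Nat.succ_pos r1)) h
  | succ r2 ih =>
      rw [Function.iterate_succ_apply', ih]
      funext x
      have hsum : HasDerivAt (fun t => ∑ k ∈ Finset.range (r1+1),
            ((r1.choose k : ℝ) * (r2.choose k : ℝ) * (2 * a 0 1)^k * (k.factorial : ℝ)
              / (s0 * s1)^k)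
            * Gfun a C (r2-k) (r1-k) (Function.update x 1 t))
          (∑ k ∈ Finset.range (r1+1),
            ((r1.choose k : ℝ) * (r2.choose k : ℝ) * (2 * a 0 1)^k * (k.factorial : ℝ)
              / (s0 * s1)^k)
            * (2 * x 1 * Gfun a C (r2-k) (r1-k) x
              - (s1 * Gfun a C (r2-k+1) (r1-k) x
                + (2 * ((r1-k : ℕ) : ℝ) * a 0 1 / s0) * Gfun a C (r2-k) (r1-k-1) x)))
          (x 1) := by
        apply HasDerivAt.fun_sum
        intro k _
        exact (hasDerivAt_G1 a C hpos hsymm hC (r2-k) (r1-k) x).const_mul _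
      have h := hsum.const_mul (s1^r2)
      rw [creation_apply_of_hasDerivAt 1
        (fun y => s1^r2 * ∑ k ∈ Finset.range (r1+1),
          ((r1.choose k : ℝ) * (r2.choose k : ℝ) * (2 * a 0 1)^k * (k.factorial : ℝ)
              / (s0 * s1)^k)
            * Gfun a C (r2-k) (r1-k) y) x _ (by exact h)]
      have hcomb : ∀ (c : ℝ) (F G : ℕ → ℝ),
          -(c * ∑ k ∈ Finset.range (r1+1), F k)
            + 2 * x 1 * (c * ∑ k ∈ Finset.range (r1+1), G k)
          = c * ∑ k ∈ Finset.range (r1+1), (2 * x 1 * G k - F k) := by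
        intro c F G
        rw [Finset.sum_sub_distrib, ← Finset.mul_sum]
        ring
      rw [hcomb]
      have hterm : ∑ k ∈ Finset.range (r1+1),
          (2 * x 1 * (((r1.choose k : ℝ) * (r2.choose k : ℝ) * (2 * a 0 1)^k * (k.factorial : ℝ)
              / (s0 * s1)^k) * Gfun a C (r2-k) (r1-k) x)
            - ((r1.choose k : ℝ) * (r2.choose k : ℝ) * (2 * a 0 1)^k * (k.factorial : ℝ)
              / (s0 * s1)^k)
            * (2 * x 1 * Gfun a C (r2-k) (r1-k) x
              - (s1 * Gfun a C (r2-k+1) (r1-k) x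
                + (2 * ((r1-k : ℕ) : ℝ) * a 0 1 / s0) * Gfun a C (r2-k) (r1-k-1) x)))
          = ∑ k ∈ Finset.range (r1+1),
            ((r1.choose k : ℝ) * (r2.choose k : ℝ) * (2 * a 0 1)^k * (k.factorial : ℝ)
              / (s0 * s1)^k)
            * (s1 * Gfun a C (r2-k+1) (r1-k) x
                + (2 * ((r1-k : ℕ) : ℝ) * a 0 1 / s0) * Gfun a C (r2-k) (r1-k-1) x) := by
        apply Finset.sum_congr rfl
        intro k _
        ring
      rw [hterm]
      rw [sum_reindex r1 r2 s0 s1 (a 0 1) hs0ne hs1ne (fun m n => Gfun a C m n x)]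
      rw [← mul_assoc, ← pow_succ]



lemma creation_const_mul (j : Fin 3) (c : ℝ) (f : (Fin 3 → ℝ) → ℝ) :
    creation j (fun y => c * f y) = fun x => c * creation j f x := by
  funext x
  unfold creation pd
  rw [deriv_const_mul_field]
  ring

lemma iterate_creation_const_mul (j : Fin 3) (c : ℝ) (r : ℕ) :
    ∀ f : (Fin 3 → ℝ) → ℝ,
      (creation j)^[r] (fun y => c * f y) = fun x => c * (creation j)^[r] f x := by
  induction r with
  | zero => intro f; rfl
  | succ r ih =>
      intro f
      rw [Function.iterate_succ_apply, Function.iterate_succ_apply,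
        creation_const_mul j c f, ih (creation j f)]

theorem stmt3 (a : Fin 3 → Fin 3 → ℝ) (hpos : ∀ i, 0 < a i i)
    (hsymm : ∀ i j, a i j = a j i)
    (C : Matrix (Fin 3) (Fin 3) ℝ)
    (hC : ∀ i j, C i j = if i = j then a i i else -(a i j))
    (r1 r2 : ℕ) (x : Fin 3 → ℝ) :
    (creation 1)^[r2] ((creation 0)^[r1]
        (fun y => Real.exp (-(∑ i, ∑ j, y i * C i j * y j)))) x
      = (1 + a 0 0) ^ ((r1 : ℝ)/2) * (1 + a 1 1) ^ ((r2 : ℝ)/2) *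
        ∑ k ∈ Finset.range (min r1 r2 + 1),
          (r1.choose k : ℝ) * (r2.choose k : ℝ) *
            ((2 * a 0 1)^k * (k.factorial : ℝ) /
              ((1 + a 0 0) * (1 + a 1 1)) ^ ((k : ℝ)/2)) *
            Hpoly (r2 - k) (Sfun a 1 x) * Hpoly (r1 - k) (Sfun a 0 x) *
            Real.exp (-(∑ i, ∑ j, x i * C i j * x j)) := by
  have h0 : (0:ℝ) < 1 + a 0 0 := by have := hpos 0; linarith
  have h1 : (0:ℝ) < 1 + a 1 1 := by have := hpos 1; linarith
  set s0 := Real.sqrt (1 + a 0 0) with hs0def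
  set s1 := Real.sqrt (1 + a 1 1) with hs1def
  have hs0ne : s0 ≠ 0 := by positivity
  have hs1ne : s1 ≠ 0 := by positivity
  have hGE : (fun y => Real.exp (-(∑ i, ∑ j, y i * C i j * y j))) = Gfun a C 0 0 := by
    funext y
    unfold Gfun Efun
    rw [Hpoly_zero, Hpoly_zero]
    ring
  rw [hGE, step1 a C hpos hsymm hC r1,
    iterate_creation_const_mul 1 (s0 ^ r1) r2 (Gfun a C 0 r1),
    step2 a C hpos hsymm hC r1 r2]
  beta_reduce
  -- convert the rpow factors
  have hr0 : (1 + a 0 0) ^ ((r1 : ℝ)/2) = s0 ^ r1 := by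
    rw [show ((r1 : ℝ)/2) = (1/2) * (r1 : ℝ) by ring, Real.rpow_mul h0.le,
      Real.rpow_natCast, hs0def, Real.sqrt_eq_rpow]
  have hr1 : (1 + a 1 1) ^ ((r2 : ℝ)/2) = s1 ^ r2 := by
    rw [show ((r2 : ℝ)/2) = (1/2) * (r2 : ℝ) by ring, Real.rpow_mul h1.le,
      Real.rpow_natCast, hs1def, Real.sqrt_eq_rpow]
  rw [hr0, hr1]
  -- extend the sum on the RHS
  have hsub : Finset.range (min r1 r2 + 1) ⊆ Finset.range (r1 + 1) :=
    Finset.range_subset_range.mpr (by omega)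
  have hzero : ∀ k ∈ Finset.range (r1 + 1), k ∉ Finset.range (min r1 r2 + 1) →
      (r1.choose k : ℝ) * (r2.choose k : ℝ) *
        ((2 * a 0 1)^k * (k.factorial : ℝ) /
          ((1 + a 0 0) * (1 + a 1 1)) ^ ((k : ℝ)/2)) *
        Hpoly (r2 - k) (Sfun a 1 x) * Hpoly (r1 - k) (Sfun a 0 x) *
        Real.exp (-(∑ i, ∑ j, x i * C i j * x j)) = 0 := by
    intro k hk hk2
    have h2 : r2 < k := by
      simp only [Finset.mem_range] at hk hk2
      omega
    rw [Nat.choose_eq_zero_of_lt h2]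
    push_cast
    ring
  rw [Finset.sum_subset hsub hzero]
  simp only [Finset.mul_sum]
  rw [← hs0def, ← hs1def]
  apply Finset.sum_congr rfl
  intro k hk
  have hkconv : ((1 + a 0 0) * (1 + a 1 1)) ^ ((k : ℝ)/2) = (s0 * s1) ^ k := by
    rw [show ((k : ℝ)/2) = (1/2) * (k : ℝ) by ring, Real.rpow_mul (by positivity),
      Real.rpow_natCast, hs0def, hs1def, ← Real.sqrt_mul h0.le, Real.sqrt_eq_rpow]
  rw [hkconv]
  unfold Gfun Efun
  ring
end Key
end
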